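/- Let A be an n×n matrix over a field with rows u,v agreeing outside columns u,v (u<v). Then (A_{u,u} − A_{v,u})·det(A^{u;u}) − (−1)^{u+v}(A_{v,v} − A_{u,v})·det(A^{u;v}) = det(A), and (A_{u,u} − A_{v,u})·det(A^{v;u}) − (−1)^{u+v}(A_{v,v} − A_{u,v})·det(A^{v;v}) = −(−1)^{u+v}·det(A). -/
import Mathlib


/-- Linear combinations of minors in the deleted rows `u` and `v` themselves:
`(A u u − A v u)·det A^{u;u} − (−1)^{u+v}(A v v − A u v)·det A^{u;v} = det A` and
`(A u u − A v u)·det A^{v;u} − (−1)^{u+v}(A v v − A u v)·det A^{v;v} = −(−1)^{u+v}·det A`. -/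
theorem minors_linear_combination_deleted_rows {K : Type*} [Field K] {n : ℕ}
    (A : Matrix (Fin (n + 1)) (Fin (n + 1)) K) (u v : Fin (n + 1)) (huv : u < v)
    (hrow : ∀ w, w ≠ u → w ≠ v → A u w = A v w) :
    (A u u - A v u) * (A.submatrix u.succAbove u.succAbove).det
      - (-1 : K) ^ ((u : ℕ) + (v : ℕ)) * (A v v - A u v) *
        (A.submatrix u.succAbove v.succAbove).det = A.det ∧
    (A u u - A v u) * (A.submatrix v.succAbove u.succAbove).det
      - (-1 : K) ^ ((u : ℕ) + (v : ℕ)) * (A v v - A u v) *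
        (A.submatrix v.succAbove v.succAbove).det
      = -(-1 : K) ^ ((u : ℕ) + (v : ℕ)) * A.det := by
  have hne : u ≠ v := ne_of_lt huv
  -- Laplace expansion of `det (A.updateRow r (A u - A v))` along row `r`:
  have key : ∀ r : Fin (n + 1),
      (A.updateRow r (A u - A v)).det
        = (-1 : K) ^ ((r : ℕ) + (u : ℕ)) * (A u u - A v u) *
            (A.submatrix r.succAbove u.succAbove).det
        + (-1 : K) ^ ((r : ℕ) + (v : ℕ)) * (A u v - A v v) *
            (A.submatrix r.succAbove v.succAbove).det := by
    intro r
    have hsub : ∀ w : Fin (n + 1),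
        (A.updateRow r (A u - A v)).submatrix r.succAbove w.succAbove
          = A.submatrix r.succAbove w.succAbove := by
      intro w
      ext i j
      simp [Matrix.submatrix_apply, Matrix.updateRow_ne (Fin.succAbove_ne r i)]
    rw [Matrix.det_succ_row (A.updateRow r (A u - A v)) r]
    have hzero : ∀ j ∈ (Finset.univ : Finset (Fin (n + 1))), j ∉ ({u, v} : Finset (Fin (n + 1))) →
        (-1 : K) ^ ((r : ℕ) + (j : ℕ)) * (A.updateRow r (A u - A v)) r j *
          ((A.updateRow r (A u - A v)).submatrix r.succAbove j.succAbove).det = 0 := by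
      intro j _ hj
      simp only [Finset.mem_insert, Finset.mem_singleton, not_or] at hj
      have : (A.updateRow r (A u - A v)) r j = 0 := by
        rw [Matrix.updateRow_self, Pi.sub_apply, hrow j hj.1 hj.2, sub_self]
      rw [this, mul_zero, zero_mul]
    rw [← Finset.sum_subset (Finset.subset_univ ({u, v} : Finset (Fin (n + 1)))) hzero,
      Finset.sum_pair hne, Matrix.updateRow_self, hsub, hsub]
    simp [Pi.sub_apply]
  have hdetu : (A.updateRow u (A u - A v)).det = A.det := by
    have h := Matrix.det_updateRow_add A u (A u - A v) (A v)
    rw [sub_add_cancel, Matrix.updateRow_eq_self,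
      Matrix.det_updateRow_eq_zero (M := A) hne.symm, add_zero] at h
    exact h.symm
  have hdetv : (A.updateRow v (A u - A v)).det = -A.det := by
    have h := Matrix.det_updateRow_add A v (A u - A v) (A v)
    rw [sub_add_cancel, Matrix.updateRow_eq_self,
      Matrix.det_updateRow_eq_zero (M := A) hne] at h
    linear_combination -h
  have hsq : (-1 : K) ^ ((u : ℕ) + (v : ℕ)) * (-1 : K) ^ ((u : ℕ) + (v : ℕ)) = 1 := by
    rw [← mul_pow]; norm_num
  have h1 := (key u).symm.trans hdetu
  have h2 := (key v).symm.trans hdetv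
  rw [← two_mul, pow_mul] at h1
  norm_num at h1
  rw [Nat.add_comm (v : ℕ) (u : ℕ), ← two_mul (v : ℕ), pow_mul] at h2
  norm_num at h2
  constructor
  · linear_combination h1
  · linear_combination (-1 : K) ^ ((u : ℕ) + (v : ℕ)) * h2
      - (A u u - A v u) * (A.submatrix v.succAbove u.succAbove).det * hsq
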